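/- Let A be an automaton with timers, and consider the modified semantics in which every delay of a timed run is required to be strictly positive. Then A is race-avoiding under this semantics: the only races that can appear in a padded timed run with all delays positive arise when a timer is discarded while its value is zero, the block graph of such a run is always acyclic, and hence every such run with races can be wiggled. -/

import Mathlib

set_option maxHeartbeats 1000000

namespace AwT

/-- Actions of an automaton with timers: reading an input, or processing the timeout of a timer. -/
inductive Act (I X : Type) where
  | input : I → Act I X
  | timeout : X → Act I X

/-- Updates: `some (x, c)` starts timer `x` with positive integer value `c`; `none` is `⊥`. -/
abbrev Upd (X : Type) := Option (X × ℕ+)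

/-- An automaton with timers (AT). `X` is the (finite) set of timers, `I` the (finite) set of
inputs, `Q` the (finite) set of states. -/
structure AT (X I Q : Type) [DecidableEq X] where
  q0 : Q
  χ : Q → Finset X
  δ : Q → Act I X → Option (Q × Upd X)
  init_active : χ q0 = ∅
  defined_iff : ∀ q a, (δ q a).isSome ↔
      (∃ i, a = Act.input i) ∨ (∃ x ∈ χ q, a = Act.timeout x)
  timeout_self : ∀ q x q' y c, δ q (Act.timeout x) = some (q', some (y, c)) → y = x
  noupdate_sub : ∀ q a q', δ q a = some (q', none) → χ q' ⊆ χ q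
  noupdate_timeout : ∀ q x q', δ q (Act.timeout x) = some (q', none) → x ∉ χ q'
  update_mem : ∀ q a q' x c, δ q a = some (q', some (x, c)) → x ∈ χ q'
  update_sub : ∀ q a q' x c, δ q a = some (q', some (x, c)) → χ q' \ {x} ⊆ χ q

variable {X I Q : Type} [DecidableEq X]

/-- A timed run `(q₀,κ₀) d₁ i₁/u₁ … dₙ iₙ/uₙ d_{n+1} (q,κ)` of an AT, with `n` discrete
transitions.  `states k` and `vals k` give the configuration before the `k`-th delay,
`delays k` is the `k`-th delay, and `acts k`/`upds k` are the `k`-th action and update. -/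
structure TimedRun (A : AT X I Q) (n : ℕ) where
  states : Fin (n+1) → Q
  vals : Fin (n+1) → X → ℝ
  delays : Fin (n+1) → ℝ
  acts : Fin n → Act I X
  upds : Fin n → Upd X
  init_state : states 0 = A.q0
  init_val : ∀ x, vals 0 x = 0
  delays_nonneg : ∀ k, 0 ≤ delays k
  delays_le : ∀ k, ∀ x ∈ A.χ (states k), delays k ≤ vals k x
  trans : ∀ k : Fin n, A.δ (states k.castSucc) (acts k) = some (states k.succ, upds k)
  timeout_zero : ∀ (k : Fin n) (x : X), acts k = Act.timeout x →
      vals k.castSucc x - delays k.castSucc = 0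
  val_step : ∀ (k : Fin n) (y : X),
      vals k.succ y = (upds k).elim (vals k.castSucc y - delays k.castSucc)
        (fun p => if y = p.1 then ((p.2 : ℕ) : ℝ) else vals k.castSucc y - delays k.castSucc)

variable {A : AT X I Q} {n : ℕ}

/-- A timed run is padded if its first and last delays are positive and no active timer has
value 0 in its last configuration. -/
def Padded (ρ : TimedRun A n) : Prop :=
  0 < ρ.delays 0 ∧ 0 < ρ.delays (Fin.last n) ∧
    ∀ x ∈ A.χ (ρ.states (Fin.last n)),
      ρ.vals (Fin.last n) x - ρ.delays (Fin.last n) ≠ 0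

/-- Timer fates of blocks: `⊥`, `●` (discarded at value zero), `×`. -/
inductive Fate where
  | bot | disc0 | cross
  deriving DecidableEq

/-- The transition at index `ℓ` discards the timer `x`: `x` is active before the transition,
the action is not `to[x]`, and the transition stops or restarts `x`. -/
def Discards (ρ : TimedRun A n) (ℓ : Fin n) (x : X) : Prop :=
  x ∈ A.χ (ρ.states ℓ.castSucc) ∧ ρ.acts ℓ ≠ Act.timeout x ∧
    (x ∉ A.χ (ρ.states ℓ.succ) ∨ ∃ c, ρ.upds ℓ = some (x, c))

/-- Action `k` triggers action `k'`. -/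
def Triggers (ρ : TimedRun A n) (k k' : Fin n) : Prop :=
  k < k' ∧ ∃ x c, ρ.upds k = some (x, c) ∧ ρ.acts k' = Act.timeout x ∧
    ∀ ℓ, k < ℓ → ℓ < k' → ρ.acts ℓ ≠ Act.timeout x ∧ ¬ Discards ρ ℓ x

/-- After action `k` (which restarts `x`), the first transition discarding `x` does so while the
value of `x` is zero. -/
def DiscardedAtZeroAfter (ρ : TimedRun A n) (k : Fin n) (x : X) : Prop :=
  ∃ ℓ, k < ℓ ∧ Discards ρ ℓ x ∧ (∀ m, k < m → m < ℓ → ¬ Discards ρ m x) ∧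
    ρ.vals ℓ.castSucc x - ρ.delays ℓ.castSucc = 0

/-- `γ` is the timer fate of a block whose index sequence is `ks`. -/
def FateOf (ρ : TimedRun A n) (ks : List (Fin n)) (γ : Fate) : Prop :=
  ∀ k, ks.getLast? = some k →
    ((ρ.upds k = none → γ = Fate.bot) ∧
     ∀ x c, ρ.upds k = some (x, c) →
        ((DiscardedAtZeroAfter ρ k x → γ = Fate.disc0) ∧
         (¬ DiscardedAtZeroAfter ρ k x → γ = Fate.cross)))

/-- `(ks, γ)` is a block of `ρ`: `ks` is a maximal chain of actions each triggering the next,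
starting with an input-action, and `γ` is its timer fate. -/
def IsBlock (ρ : TimedRun A n) (ks : List (Fin n)) (γ : Fate) : Prop :=
  ks ≠ [] ∧ List.Chain' (Triggers ρ) ks ∧
    (∀ k, ks.head? = some k → ∃ i, ρ.acts k = Act.input i) ∧
    (∀ k k', ks.getLast? = some k → ¬ Triggers ρ k k') ∧
    FateOf ρ ks γ

/-- The sum of the delays strictly between action `k` and action `k'` (for `k ≤ k'`). -/
def delayBetween (ρ : TimedRun A n) (k k' : Fin n) : ℝ :=
  ∑ ℓ ∈ Finset.Ioc k k', ρ.delays ℓ.castSucc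

/-- `B ≺ B'`: blocks `B` and `B'` participate in a race, witnessed either by an action of `B`
occurring before an action of `B'` with total delay zero in between, or by an action of `B`
being the first to discard the timer (re)started by the last action of `B'` while it has
value zero. -/
def Prec (ρ : TimedRun A n) (B B' : List (Fin n) × Fate) : Prop :=
  (∃ k ∈ B.1, ∃ k' ∈ B'.1, k < k' ∧ delayBetween ρ k k' = 0) ∨
  (B'.2 = Fate.disc0 ∧ ∃ k' x c, B'.1.getLast? = some k' ∧ ρ.upds k' = some (x, c) ∧
     ∃ ℓ ∈ B.1, k' < ℓ ∧ Discards ρ ℓ x ∧ ∀ m, k' < m → m < ℓ → ¬ Discards ρ m x)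

/-- Two blocks participate in a (common) race. -/
def BlocksRace (ρ : TimedRun A n) (B B' : List (Fin n) × Fate) : Prop :=
  Prec ρ B B' ∨ Prec ρ B' B

/-- The run contains a race. -/
def HasRace (ρ : TimedRun A n) : Prop :=
  ∃ B B' : List (Fin n) × Fate, IsBlock ρ B.1 B.2 ∧ IsBlock ρ B'.1 B'.2 ∧ B ≠ B' ∧
    BlocksRace ρ B B'

/-- The block graph of `ρ` (vertices: blocks, edges: `≺`) has a cycle. -/
def HasCycle (ρ : TimedRun A n) : Prop :=
  ∃ (m : ℕ) (f : Fin (m+1) → List (Fin n) × Fate),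
    0 < m ∧ (∀ j, IsBlock ρ (f j).1 (f j).2) ∧ f (Fin.last m) = f 0 ∧
      ∀ j : Fin m, Prec ρ (f j.castSucc) (f j.succ)

open Classical in
/-- The delays of `ρ` after shifting the block whose set of action indices is `S` by `ε`:
the delay preceding an action of the block whose predecessor is not in the block gains `ε`,
and the delay following an action of the block whose successor is not in the block loses `ε`. -/
noncomputable def wiggledDelay (ρ : TimedRun A n) (S : Set (Fin n)) (ε : ℝ)
    (j : Fin (n+1)) : ℝ :=
  ρ.delays j
    + (if (∃ k : Fin n, k.castSucc = j ∧ k ∈ S ∧ ∀ k' : Fin n, k'.succ = j → k' ∉ S)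
        then ε else 0)
    - (if (∃ k : Fin n, k.succ = j ∧ k ∈ S ∧ ∀ k' : Fin n, k'.castSucc = j → k' ∉ S)
        then ε else 0)

/-- `ρ'` is obtained from `ρ` by shifting the actions with indices in `S` by `ε`. -/
def WiggleSpec (ρ ρ' : TimedRun A n) (S : Set (Fin n)) (ε : ℝ) : Prop :=
  ρ'.states = ρ.states ∧ ρ'.acts = ρ.acts ∧ ρ'.upds = ρ.upds ∧
    ∀ j, ρ'.delays j = wiggledDelay ρ S ε j

/-- The untimed trace of a run: the alternating sequence of states and actions. -/
def untime (ρ : TimedRun A n) : List (Q × Act I X) × Q :=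
  (List.ofFn (fun k : Fin n => (ρ.states k.castSucc, ρ.acts k)), ρ.states (Fin.last n))

/-- The block with index sequence `ks` can be wiggled: for some `ε ≠ 0`, shifting it by `ε`
yields a padded timed run (with the same untimed trace) in which it participates in no race. -/
def CanWiggleBlock (ρ : TimedRun A n) (ks : List (Fin n)) : Prop :=
  ∃ ε : ℝ, ε ≠ 0 ∧ ∃ ρ' : TimedRun A n, WiggleSpec ρ ρ' {k | k ∈ ks} ε ∧ Padded ρ' ∧
    ∀ (γ₁ : Fate) (ks₂ : List (Fin n)) (γ₂ : Fate),
      IsBlock ρ' ks γ₁ → IsBlock ρ' ks₂ γ₂ → (ks, γ₁) ≠ (ks₂, γ₂) →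
        ¬ BlocksRace ρ' (ks, γ₁) (ks₂, γ₂)

/-- One wiggling step: wiggle a single block of `ρ`. -/
def WiggleStep (ρ ρ' : TimedRun A n) : Prop :=
  ∃ (ks : List (Fin n)) (γ : Fate) (ε : ℝ), ε ≠ 0 ∧ IsBlock ρ ks γ ∧
    WiggleSpec ρ ρ' {k | k ∈ ks} ε ∧ Padded ρ' ∧
    ∀ (γ₁ : Fate) (ks₂ : List (Fin n)) (γ₂ : Fate),
      IsBlock ρ' ks γ₁ → IsBlock ρ' ks₂ γ₂ → (ks, γ₁) ≠ (ks₂, γ₂) →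
        ¬ BlocksRace ρ' (ks, γ₁) (ks₂, γ₂)

/-- `ρ` can be wiggled: wiggling its blocks one at a time yields a race-free padded run with
the same untimed trace. -/
def Wigglable (ρ : TimedRun A n) : Prop :=
  ∃ ρ' : TimedRun A n, Relation.ReflTransGen WiggleStep ρ ρ' ∧ Padded ρ' ∧
    ¬ HasRace ρ' ∧ untime ρ' = untime ρ

/-- `A` is race-avoiding. -/
def RaceAvoiding (A : AT X I Q) : Prop :=
  ∀ (n : ℕ) (ρ : TimedRun A n), Padded ρ → HasRace ρ →
    ∃ (n' : ℕ) (ρ' : TimedRun A n'), Padded ρ' ∧ ¬ HasRace ρ' ∧ untime ρ' = untime ρ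

/-- All delays of the run are strictly positive. -/
def AllPos (ρ : TimedRun A n) : Prop := ∀ j, 0 < ρ.delays j

/-- `ks` is (the index sequence of) an `x`-block: its actions (re)start the timer `x`. -/
def IsXBlock (ρ : TimedRun A n) (ks : List (Fin n)) (x : X) : Prop :=
  ∃ k ∈ ks, ∃ c, ρ.upds k = some (x, c)

/-- Modified semantics from a total order on timers: in every race, any action of an `x`-block
is processed before any action of a `y`-block whenever `x < y`. -/
def OrderedSem [LT X] (ρ : TimedRun A n) : Prop :=
  ∀ (ks : List (Fin n)) (γ : Fate) (ks' : List (Fin n)) (γ' : Fate) (x y : X),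
    IsBlock ρ ks γ → IsBlock ρ ks' γ' → IsXBlock ρ ks x → IsXBlock ρ ks' y → x < y →
      ∀ k ∈ ks, ∀ k' ∈ ks',
        ((k < k' ∧ delayBetween ρ k k' = 0) ∨ (k' < k ∧ delayBetween ρ k' k = 0)) → k < k'

/-! ### Configurations, timer-equivalence and the region automaton -/

/-- Valuations `κ, κ'` (on the active timers of `q`) are timer-equivalent. -/
def ValEquiv (A : AT X I Q) (q : Q) (κ κ' : X → ℝ) : Prop :=
  ∀ x ∈ A.χ q, (⌊κ x⌋ = ⌊κ' x⌋) ∧ (Int.fract (κ x) = 0 ↔ Int.fract (κ' x) = 0) ∧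
    ∀ y ∈ A.χ q, (Int.fract (κ x) ≤ Int.fract (κ y) ↔ Int.fract (κ' x) ≤ Int.fract (κ' y))

/-- Timer-equivalence of configurations. -/
def ConfigEquiv (A : AT X I Q) (c c' : Q × (X → ℝ)) : Prop :=
  c.1 = c'.1 ∧ ValEquiv A c.1 c.2 c'.2

/-- A discrete transition between configurations, on action `a` with update `u`. -/
def DiscreteStep (A : AT X I Q) (c : Q × (X → ℝ)) (a : Act I X) (u : Upd X)
    (c' : Q × (X → ℝ)) : Prop :=
  A.δ c.1 a = some (c'.1, u) ∧ (∀ x, a = Act.timeout x → c.2 x = 0) ∧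
    ∀ y ∈ A.χ c'.1,
      c'.2 y = u.elim (c.2 y) (fun p => if y = p.1 then ((p.2 : ℕ) : ℝ) else c.2 y)

/-- A delay transition between configurations, of duration `d ≥ 0`. -/
def DelayStep (A : AT X I Q) (c : Q × (X → ℝ)) (d : ℝ) (c' : Q × (X → ℝ)) : Prop :=
  0 ≤ d ∧ c'.1 = c.1 ∧ (∀ x ∈ A.χ c.1, d ≤ c.2 x) ∧ ∀ x ∈ A.χ c.1, c'.2 x = c.2 x - d

/-- One step of a timed run between configurations: a delay or a discrete transition. -/
def Step (A : AT X I Q) (c c' : Q × (X → ℝ)) : Prop :=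
  (∃ d, DelayStep A c d c') ∨ (∃ a u, DiscreteStep A c a u c')

/-- One transition of the region automaton between the classes of `c` and `c'`:
some representatives are related by a positive delay (`τ`) or a discrete transition. -/
def RegStep (A : AT X I Q) (c c' : Q × (X → ℝ)) : Prop :=
  ∃ c₁ c₂, ConfigEquiv A c c₁ ∧ ConfigEquiv A c' c₂ ∧
    ((∃ d, 0 < d ∧ DelayStep A c₁ d c₂) ∨ ∃ a u, DiscreteStep A c₁ a u c₂)

/-! ### The extended run and relative elapsed time -/

open Classical in
/-- The timers discarded by the transition at index `k`. -/
noncomputable def discardedSet (ρ : TimedRun A n) (k : Fin n) : Finset X :=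
  (A.χ (ρ.states k.castSucc)).filter (fun x => Discards ρ k x)

/-- Positions of actions in the extended run of `ρ`: `(k, 0)` is the `k`-th action of `ρ`,
and `(k, j)` for `1 ≤ j` is the `j`-th zero-delay pseudo-action (`●` or `×`) inserted after
it, one for each timer it discards. -/
def EPos (ρ : TimedRun A n) : Type := {p : Fin n × ℕ // p.2 ≤ (discardedSet ρ p.1).card}

open Classical in
/-- Relative elapsed time between two positions of the extended run: the sum `d` of the delays
between them if the first occurs (weakly) before the second, and `-d` otherwise. -/
noncomputable def reltime (ρ : TimedRun A n) (p p' : EPos ρ) : ℝ :=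
  if p.1.1 < p'.1.1 ∨ (p.1.1 = p'.1.1 ∧ p.1.2 ≤ p'.1.2) then delayBetween ρ p.1.1 p'.1.1
  else - delayBetween ρ p'.1.1 p.1.1

end AwT
namespace AwT

open Classical

variable {X I Q : Type} [DecidableEq X] {A : AT X I Q} {n : ℕ}

theorem triggers_lt {ρ : TimedRun A n} {k k' : Fin n} (h : Triggers ρ k k') : k < k' := h.1

theorem rtg_le {ρ : TimedRun A n} {a b : Fin n} (h : Relation.ReflTransGen (Triggers ρ) a b) :
    a ≤ b := by
  induction h with
  | refl => exact le_refl _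
  | tail _ h ih => exact le_trans ih (le_of_lt h.1)

theorem delayBetween_pos {ρ : TimedRun A n} (hA : AllPos ρ) {k k' : Fin n} (h : k < k') :
    0 < delayBetween ρ k k' :=
  Finset.sum_pos (fun ℓ _ => hA _) (Finset.nonempty_Ioc.mpr h)

theorem discards_congr {ρ' ρ : TimedRun A n} (hs : ρ'.states = ρ.states)
    (ha : ρ'.acts = ρ.acts) (hu : ρ'.upds = ρ.upds) (ℓ : Fin n) (x : X) :
    Discards ρ' ℓ x ↔ Discards ρ ℓ x := by simp [Discards, hs, ha, hu]

theorem triggers_congr {ρ' ρ : TimedRun A n} (hs : ρ'.states = ρ.states)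
    (ha : ρ'.acts = ρ.acts) (hu : ρ'.upds = ρ.upds) (k k' : Fin n) :
    Triggers ρ' k k' ↔ Triggers ρ k k' := by
  simp [Triggers, ha, hu, discards_congr hs ha hu]

theorem activeBetween {ρ : TimedRun A n} {p : Fin n} {x : X} {c : ℕ+}
    (hp : ρ.upds p = some (x, c)) (e : ℕ)
    (hbet : ∀ m : Fin n, p < m → (m : ℕ) < e → ρ.acts m ≠ Act.timeout x ∧ ¬ Discards ρ m x) :
    ∀ mv : ℕ, ∀ hmv : mv < n, (p : ℕ) < mv → mv ≤ e →
      x ∈ A.χ (ρ.states (⟨mv, hmv⟩ : Fin n).castSucc) := by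
  intro mv
  induction mv with
  | zero => intro _ h _; omega
  | succ mw ih =>
    intro hmv hplt hle
    have hwn : mw < n := by omega
    by_cases hbase : mw = (p : ℕ)
    · have heq : (⟨mw + 1, hmv⟩ : Fin n).castSucc = p.succ := by
        apply Fin.ext; simp [hbase]
      rw [heq]
      have h2 := ρ.trans p
      rw [hp] at h2
      exact A.update_mem _ _ _ _ _ h2
    · have hx := ih hwn (by omega) (by omega)
      have hm : p < (⟨mw, hwn⟩ : Fin n) := by rw [Fin.lt_def]; show (p : ℕ) < mw; omega
      have hb := hbet ⟨mw, hwn⟩ hm (by show mw < e; omega)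
      have hsucc : (⟨mw + 1, hmv⟩ : Fin n).castSucc = (⟨mw, hwn⟩ : Fin n).succ := by
        apply Fin.ext; simp
      rw [hsucc]
      by_contra hnot
      exact hb.2 ⟨hx, hb.1, Or.inl hnot⟩

theorem activeBetweenF {ρ : TimedRun A n} {p b : Fin n} {x : X} {c : ℕ+}
    (hp : ρ.upds p = some (x, c))
    (hbet : ∀ m : Fin n, p < m → m < b → ρ.acts m ≠ Act.timeout x ∧ ¬ Discards ρ m x) :
    ∀ m : Fin n, p < m → m ≤ b → x ∈ A.χ (ρ.states m.castSucc) := by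
  intro m hm1 hm2
  have := activeBetween hp (b : ℕ) (fun m' h1 h2 => hbet m' h1 (by rwa [Fin.lt_def]))
    (m : ℕ) m.isLt (Fin.lt_def.mp hm1) (Fin.le_def.mp hm2)
  simpa using this

theorem noUpdBetween {ρ : TimedRun A n} {p b : Fin n} {x : X} {c : ℕ+}
    (hp : ρ.upds p = some (x, c))
    (hbet : ∀ m : Fin n, p < m → m < b → ρ.acts m ≠ Act.timeout x ∧ ¬ Discards ρ m x) :
    ∀ m : Fin n, p < m → m < b → ∀ c', ρ.upds m ≠ some (x, c') := by
  intro m hm1 hm2 c' hup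
  have hx : x ∈ A.χ (ρ.states m.castSucc) := activeBetweenF hp hbet m hm1 (le_of_lt hm2)
  exact (hbet m hm1 hm2).2 ⟨hx, (hbet m hm1 hm2).1, Or.inr ⟨c', hup⟩⟩

theorem lastUpd {ρ : TimedRun A n} :
    ∀ (jv : ℕ) (hj : jv < n + 1) (x : X), x ∈ A.χ (ρ.states ⟨jv, hj⟩) →
      ∃ (a : Fin n) (c : ℕ+), (a : ℕ) < jv ∧ ρ.upds a = some (x, c) ∧
        ∀ m : Fin n, (a : ℕ) < (m : ℕ) → (m : ℕ) < jv →
          x ∈ A.χ (ρ.states m.castSucc) ∧ ρ.acts m ≠ Act.timeout x ∧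
            ¬ Discards ρ m x ∧ ∀ c', ρ.upds m ≠ some (x, c') := by
  intro jv
  induction jv with
  | zero =>
    intro hj x hx
    exfalso
    have h0 : (⟨0, hj⟩ : Fin (n + 1)) = 0 := rfl
    rw [h0, ρ.init_state, A.init_active] at hx
    exact Finset.notMem_empty x hx
  | succ jw ih =>
    intro hj x hx
    have hjn : jw < n := by omega
    set k : Fin n := ⟨jw, hjn⟩ with hk
    have hsucc : (⟨jw + 1, hj⟩ : Fin (n + 1)) = k.succ := by apply Fin.ext; simp [hk]
    rw [hsucc] at hx
    have htrans := ρ.trans k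
    by_cases hux : ∃ c, ρ.upds k = some (x, c)
    · obtain ⟨c, hc⟩ := hux
      refine ⟨k, c, by simp [hk], hc, ?_⟩
      intro m hm1 hm2
      exfalso
      simp only [hk] at hm1
      omega
    · have hxc : x ∈ A.χ (ρ.states k.castSucc) := by
        rcases hupk : ρ.upds k with _ | ⟨z, c⟩
        · rw [hupk] at htrans; exact A.noupdate_sub _ _ _ htrans hx
        · have hzx : z ≠ x := fun h => hux ⟨c, by rw [hupk, h]⟩
          rw [hupk] at htrans
          have := A.update_sub _ _ _ _ _ htrans
          exact this (Finset.mem_sdiff.mpr ⟨hx, by simp [Ne.symm hzx]⟩)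
      have hactk : ρ.acts k ≠ Act.timeout x := by
        intro hto
        rcases hupk : ρ.upds k with _ | ⟨z, c'⟩
        · have h2 := ρ.trans k; rw [hupk, hto] at h2
          exact A.noupdate_timeout _ _ _ h2 hx
        · have h2 := ρ.trans k; rw [hupk, hto] at h2
          have hz := A.timeout_self _ _ _ _ _ h2
          exact hux ⟨c', by rw [hupk, hz]⟩
      have hdk : ¬ Discards ρ k x := by
        rintro ⟨_, _, h3 | ⟨c', hc'⟩⟩
        · exact h3 hx
        · exact hux ⟨c', hc'⟩
      have hupdk : ∀ c', ρ.upds k ≠ some (x, c') := fun c' h => hux ⟨c', h⟩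
      have hcast : (⟨jw, by omega⟩ : Fin (n + 1)) = k.castSucc := by apply Fin.ext; simp [hk]
      obtain ⟨a, c, ha1, ha2, ha3⟩ := ih (by omega) x (by rw [hcast]; exact hxc)
      refine ⟨a, c, by omega, ha2, ?_⟩
      intro m hm1 hm2
      by_cases hmk : (m : ℕ) = jw
      · have hmk' : m = k := Fin.ext (by simp [hmk, hk])
        rw [hmk']; exact ⟨hxc, hactk, hdk, hupdk⟩
      · exact ha3 m hm1 (by omega)

theorem lastUpdF {ρ : TimedRun A n} (j : Fin (n + 1)) (x : X) (hx : x ∈ A.χ (ρ.states j)) :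
    ∃ (a : Fin n) (c : ℕ+), (a : ℕ) < (j : ℕ) ∧ ρ.upds a = some (x, c) ∧
      ∀ m : Fin n, (a : ℕ) < (m : ℕ) → (m : ℕ) < (j : ℕ) →
        x ∈ A.χ (ρ.states m.castSucc) ∧ ρ.acts m ≠ Act.timeout x ∧
          ¬ Discards ρ m x ∧ ∀ c', ρ.upds m ≠ some (x, c') := by
  have hj : (⟨(j : ℕ), j.isLt⟩ : Fin (n + 1)) = j := by apply Fin.ext; rfl
  exact lastUpd (j : ℕ) j.isLt x (by rw [hj]; exact hx)

theorem timeout_active {ρ : TimedRun A n} {k : Fin n} {x : X} (h : ρ.acts k = Act.timeout x) :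
    x ∈ A.χ (ρ.states k.castSucc) := by
  have h1 : (A.δ (ρ.states k.castSucc) (ρ.acts k)).isSome := by rw [ρ.trans k]; rfl
  rcases (A.defined_iff _ _).mp h1 with ⟨i, hi⟩ | ⟨y, hy, hyt⟩
  · rw [h] at hi; simp at hi
  · rw [h] at hyt
    have : x = y := by simpa using hyt
    rwa [this]

theorem timeout_trigger {ρ : TimedRun A n} {k : Fin n} {x : X} (h : ρ.acts k = Act.timeout x) :
    ∃ p : Fin n, Triggers ρ p k := by
  obtain ⟨a, c, ha1, ha2, ha3⟩ := lastUpdF (ρ := ρ) k.castSucc x (timeout_active h)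
  refine ⟨a, ?_, x, c, ha2, h, ?_⟩
  · rw [Fin.lt_def]; simpa using ha1
  · intro m hm1 hm2
    have h3 := ha3 m (Fin.lt_def.mp hm1) (by simpa using Fin.lt_def.mp hm2)
    exact ⟨h3.2.1, h3.2.2.1⟩

theorem triggers_succ_unique {ρ : TimedRun A n} {k a b : Fin n}
    (h1 : Triggers ρ k a) (h2 : Triggers ρ k b) : a = b := by
  obtain ⟨hka, x, c, hu, hact, hbet⟩ := h1
  obtain ⟨hkb, x', c', hu', hact', hbet'⟩ := h2
  have hxx : x' = x ∧ c' = c := by rw [hu] at hu'; simpa using hu'.symm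
  rcases lt_trichotomy a b with h | h | h
  · exact absurd (hxx.1 ▸ hact) ((hbet' a hka h).1)
  · exact h
  · exact absurd (hxx.1.symm ▸ hact') ((hbet b hkb h).1)

theorem triggers_pred_unique {ρ : TimedRun A n} {p q j : Fin n}
    (h1 : Triggers ρ p j) (h2 : Triggers ρ q j) : p = q := by
  have key : ∀ p q : Fin n, p < q → Triggers ρ p j → Triggers ρ q j → False := by
    intro p q hpq hp hq
    obtain ⟨hpj, x, c, hu, hact, hbet⟩ := hp
    obtain ⟨hqj, y, c', hu', hact', hbet'⟩ := hq
    have hyx : y = x := by rw [hact] at hact'; simpa using hact'.symm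
    rw [hyx] at hu'
    have hx : x ∈ A.χ (ρ.states q.castSucc) :=
      activeBetweenF hu hbet q hpq (le_of_lt hqj)
    exact (hbet q hpq hqj).2 ⟨hx, (hbet q hpq hqj).1, Or.inr ⟨c', hu'⟩⟩
  rcases lt_trichotomy p q with h | h | h
  · exact absurd (key p q h h1 h2) (not_false)
  · exact h
  · exact absurd (key q p h h2 h1) (not_false)

/-! ### Indicators and wiggled values -/

noncomputable def ind {n : ℕ} (S : Set (Fin n)) (ε : ℝ) (m : ℕ) : ℝ :=
  if h : m < n then (if (⟨m, h⟩ : Fin n) ∈ S then ε else 0) else 0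

noncomputable def indP {n : ℕ} (S : Set (Fin n)) (ε : ℝ) : ℕ → ℝ
  | 0 => 0
  | m + 1 => ind S ε m

theorem ind_coe {S : Set (Fin n)} {ε : ℝ} (k : Fin n) :
    ind S ε (k : ℕ) = if k ∈ S then ε else 0 := by
  simp [ind, k.isLt]

theorem ind_of_mem {S : Set (Fin n)} {ε : ℝ} {k : Fin n} (h : k ∈ S) :
    ind S ε (k : ℕ) = ε := by rw [ind_coe, if_pos h]

theorem ind_of_not_mem {S : Set (Fin n)} {ε : ℝ} {k : Fin n} (h : k ∉ S) :
    ind S ε (k : ℕ) = 0 := by rw [ind_coe, if_neg h]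

theorem ind_nonneg {S : Set (Fin n)} {ε : ℝ} (hε : 0 ≤ ε) (m : ℕ) : 0 ≤ ind S ε m := by
  unfold ind; split_ifs <;> simp [hε]

theorem ind_le {S : Set (Fin n)} {ε : ℝ} (hε : 0 ≤ ε) (m : ℕ) : ind S ε m ≤ ε := by
  unfold ind; split_ifs <;> simp [hε]

theorem ind_ge {S : Set (Fin n)} {ε : ℝ} (h : n ≤ m) : ind S ε m = 0 := dif_neg (by omega)

theorem indP_nonneg {S : Set (Fin n)} {ε : ℝ} (hε : 0 ≤ ε) (m : ℕ) : 0 ≤ indP S ε m := by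
  cases m with
  | zero => simp [indP]
  | succ mw => exact ind_nonneg hε mw

theorem indP_le {S : Set (Fin n)} {ε : ℝ} (hε : 0 ≤ ε) (m : ℕ) : indP S ε m ≤ ε := by
  cases m with
  | zero => simpa [indP] using hε
  | succ mw => exact ind_le hε mw

theorem wd_eq (ρ : TimedRun A n) (S : Set (Fin n)) (ε : ℝ) (j : Fin (n + 1)) :
    wiggledDelay ρ S ε j = ρ.delays j + ind S ε (j : ℕ) - indP S ε (j : ℕ) := by
  rcases j with ⟨jv, hj⟩
  unfold wiggledDelay
  rcases jv with _ | m
  · have hc2 : ¬ ∃ k : Fin n, k.succ = (⟨0, hj⟩ : Fin (n + 1)) ∧ k ∈ S ∧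
        ∀ k' : Fin n, k'.castSucc = (⟨0, hj⟩ : Fin (n + 1)) → k' ∉ S := by
      rintro ⟨k, hk, -⟩
      have := congrArg Fin.val hk
      simp at this
    rw [if_neg hc2]
    by_cases h0 : 0 < n
    · by_cases hm : (⟨0, h0⟩ : Fin n) ∈ S
      · have hc1 : ∃ k : Fin n, k.castSucc = (⟨0, hj⟩ : Fin (n + 1)) ∧ k ∈ S ∧
            ∀ k' : Fin n, k'.succ = (⟨0, hj⟩ : Fin (n + 1)) → k' ∉ S := by
          refine ⟨⟨0, h0⟩, by apply Fin.ext; simp, hm, ?_⟩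
          intro k' hk'
          have := congrArg Fin.val hk'
          simp at this
        rw [if_pos hc1]
        simp [ind, indP, h0, hm]
      · have hc1 : ¬ ∃ k : Fin n, k.castSucc = (⟨0, hj⟩ : Fin (n + 1)) ∧ k ∈ S ∧
            ∀ k' : Fin n, k'.succ = (⟨0, hj⟩ : Fin (n + 1)) → k' ∉ S := by
          rintro ⟨k, hk, hkS, -⟩
          have hv : (k : ℕ) = 0 := by simpa using congrArg Fin.val hk
          have : k = ⟨0, h0⟩ := Fin.ext (by simp [hv])
          rw [this] at hkS
          exact hm hkS
        rw [if_neg hc1]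
        simp [ind, indP, h0, hm]
    · have hc1 : ¬ ∃ k : Fin n, k.castSucc = (⟨0, hj⟩ : Fin (n + 1)) ∧ k ∈ S ∧
          ∀ k' : Fin n, k'.succ = (⟨0, hj⟩ : Fin (n + 1)) → k' ∉ S := by
        rintro ⟨k, -, -⟩
        exact h0 (lt_of_le_of_lt (Nat.zero_le _) k.isLt)
      rw [if_neg hc1]
      simp [ind, indP, h0]
  · have hmn : m < n := by omega
    have hsucc_eq : ∀ k' : Fin n, k'.succ = (⟨m + 1, hj⟩ : Fin (n + 1)) ↔ k' = ⟨m, hmn⟩ := by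
      intro k'
      constructor
      · intro h
        have := congrArg Fin.val h
        exact Fin.ext (by simpa using this)
      · intro h; subst h; apply Fin.ext; simp
    by_cases h1 : m + 1 < n
    · have hcast_eq : ∀ k : Fin n, k.castSucc = (⟨m + 1, hj⟩ : Fin (n + 1)) ↔ k = ⟨m + 1, h1⟩ := by
        intro k
        constructor
        · intro h
          have := congrArg Fin.val h
          exact Fin.ext (by simpa using this)
        · intro h; subst h; apply Fin.ext; simp
      have hc1iff : (∃ k : Fin n, k.castSucc = (⟨m + 1, hj⟩ : Fin (n + 1)) ∧ k ∈ S ∧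
          ∀ k' : Fin n, k'.succ = (⟨m + 1, hj⟩ : Fin (n + 1)) → k' ∉ S) ↔
          ((⟨m + 1, h1⟩ : Fin n) ∈ S ∧ (⟨m, hmn⟩ : Fin n) ∉ S) := by
        constructor
        · rintro ⟨k, hk, hkS, hall⟩
          rw [hcast_eq] at hk; subst hk
          exact ⟨hkS, hall _ ((hsucc_eq _).mpr rfl)⟩
        · rintro ⟨ha, hb⟩
          refine ⟨⟨m + 1, h1⟩, (hcast_eq _).mpr rfl, ha, ?_⟩
          intro k' hk'
          rw [hsucc_eq] at hk'; subst hk'; exact hb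
      have hc2iff : (∃ k : Fin n, k.succ = (⟨m + 1, hj⟩ : Fin (n + 1)) ∧ k ∈ S ∧
          ∀ k' : Fin n, k'.castSucc = (⟨m + 1, hj⟩ : Fin (n + 1)) → k' ∉ S) ↔
          ((⟨m, hmn⟩ : Fin n) ∈ S ∧ (⟨m + 1, h1⟩ : Fin n) ∉ S) := by
        constructor
        · rintro ⟨k, hk, hkS, hall⟩
          rw [hsucc_eq] at hk; subst hk
          exact ⟨hkS, hall _ ((hcast_eq _).mpr rfl)⟩
        · rintro ⟨ha, hb⟩
          refine ⟨⟨m, hmn⟩, (hsucc_eq _).mpr rfl, ha, ?_⟩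
          intro k' hk'
          rw [hcast_eq] at hk'; subst hk'; exact hb
      rw [if_congr hc1iff rfl rfl, if_congr hc2iff rfl rfl]
      by_cases ha : (⟨m + 1, h1⟩ : Fin n) ∈ S <;> by_cases hb : (⟨m, hmn⟩ : Fin n) ∈ S <;>
        simp [ind, indP, h1, hmn, ha, hb] <;> ring
    · have hc1 : ¬ ∃ k : Fin n, k.castSucc = (⟨m + 1, hj⟩ : Fin (n + 1)) ∧ k ∈ S ∧
          ∀ k' : Fin n, k'.succ = (⟨m + 1, hj⟩ : Fin (n + 1)) → k' ∉ S := by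
        rintro ⟨k, hk, -⟩
        have := congrArg Fin.val hk
        simp at this
        omega
      rw [if_neg hc1]
      have hc2iff : (∃ k : Fin n, k.succ = (⟨m + 1, hj⟩ : Fin (n + 1)) ∧ k ∈ S ∧
          ∀ k' : Fin n, k'.castSucc = (⟨m + 1, hj⟩ : Fin (n + 1)) → k' ∉ S) ↔
          ((⟨m, hmn⟩ : Fin n) ∈ S) := by
        constructor
        · rintro ⟨k, hk, hkS, -⟩
          rw [hsucc_eq] at hk; subst hk; exact hkS
        · intro ha
          refine ⟨⟨m, hmn⟩, (hsucc_eq _).mpr rfl, ha, ?_⟩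
          intro k' hk'
          have := congrArg Fin.val hk'
          simp at this
          omega
      rw [if_congr hc2iff rfl rfl]
      by_cases hb : (⟨m, hmn⟩ : Fin n) ∈ S <;> simp [ind, indP, h1, hmn, hb] <;> ring

noncomputable def wv (ρ : TimedRun A n) (S : Set (Fin n)) (ε : ℝ) : ℕ → X → ℝ
  | 0 => fun _ => 0
  | m + 1 => fun y =>
      if h : m < n then
        (ρ.upds ⟨m, h⟩).elim
          (wv ρ S ε m y - wiggledDelay ρ S ε (⟨m, h⟩ : Fin n).castSucc)
          (fun p => if y = p.1 then ((p.2 : ℕ) : ℝ)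
            else wv ρ S ε m y - wiggledDelay ρ S ε (⟨m, h⟩ : Fin n).castSucc)
      else wv ρ S ε m y

noncomputable def lastS (ρ : TimedRun A n) (S : Set (Fin n)) (ε : ℝ) : ℕ → X → ℝ
  | 0 => fun _ => 0
  | m + 1 => fun y =>
      if h : m < n then
        if ∃ c, ρ.upds ⟨m, h⟩ = some (y, c) then ind S ε m else lastS ρ S ε m y
      else lastS ρ S ε m y

theorem lastS_nonneg {ρ : TimedRun A n} {S : Set (Fin n)} {ε : ℝ} (hε : 0 ≤ ε)
    (m : ℕ) (y : X) : 0 ≤ lastS ρ S ε m y := by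
  induction m with
  | zero => simp [lastS]
  | succ mw ih =>
    simp only [lastS]
    split_ifs with h1 h2
    · exact ind_nonneg hε mw
    · exact ih
    · exact ih

theorem lastS_le {ρ : TimedRun A n} {S : Set (Fin n)} {ε : ℝ} (hε : 0 ≤ ε)
    (m : ℕ) (y : X) : lastS ρ S ε m y ≤ ε := by
  induction m with
  | zero => simpa [lastS] using hε
  | succ mw ih =>
    simp only [lastS]
    split_ifs with h1 h2
    · exact ind_le hε mw
    · exact ih
    · exact ih

theorem wv_eq (ρ : TimedRun A n) (S : Set (Fin n)) (ε : ℝ) :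
    ∀ (m : ℕ) (hm : m < n + 1) (y : X),
      wv ρ S ε m y = ρ.vals ⟨m, hm⟩ y + lastS ρ S ε m y - indP S ε m := by
  intro m
  induction m with
  | zero =>
    intro hm y
    have h0 : (⟨0, hm⟩ : Fin (n + 1)) = 0 := rfl
    simp [wv, lastS, indP, h0, ρ.init_val]
  | succ mw ih =>
    intro hm y
    have hwn : mw < n := by omega
    have hky : (⟨mw + 1, hm⟩ : Fin (n + 1)) = (⟨mw, hwn⟩ : Fin n).succ := by apply Fin.ext; simp
    have hcast : ((⟨mw, hwn⟩ : Fin n).castSucc) = (⟨mw, by omega⟩ : Fin (n + 1)) := by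
      apply Fin.ext; simp
    rw [hky, ρ.val_step ⟨mw, hwn⟩ y]
    have hwd := wd_eq ρ S ε ((⟨mw, hwn⟩ : Fin n).castSucc)
    have hcv : (((⟨mw, hwn⟩ : Fin n).castSucc : Fin (n + 1)) : ℕ) = mw := by simp
    rw [hcv] at hwd
    have hihv := ih (by omega) y
    rw [← hcast] at hihv
    simp only [wv]
    rw [dif_pos hwn]
    simp only [lastS]
    rw [dif_pos hwn]
    rcases hu : ρ.upds ⟨mw, hwn⟩ with _ | ⟨z, c⟩
    · rw [Option.elim_none, Option.elim_none,
        if_neg (show ¬ ∃ c, (none : Upd X) = some (y, c) by simp)]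
      rw [hihv, hwd]
      simp only [indP]
      ring
    · rw [Option.elim_some, Option.elim_some]
      by_cases hyz : y = z
      · rw [if_pos (show ∃ c', (some (z, c) : Upd X) = some (y, c') from ⟨c, by rw [hyz]⟩)]
        simp only [indP]
        split_ifs with hif <;> first | ring | exact absurd hyz hif
      · rw [if_neg (show ¬ ∃ c', (some (z, c) : Upd X) = some (y, c') by
          rintro ⟨c', hc'⟩
          have hzy : z = y ∧ c = c' := by simpa using hc'
          exact hyz hzy.1.symm)]
        rw [hihv, hwd]
        simp only [indP]
        split_ifs with hif <;> first | ring | exact absurd hif hyz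

theorem lastS_eq {ρ : TimedRun A n} (S : Set (Fin n)) (ε : ℝ) {x : X} {a : Fin n} {c : ℕ+}
    (ha : ρ.upds a = some (x, c)) :
    ∀ (b : ℕ), b ≤ n → (a : ℕ) < b →
      (∀ m : Fin n, (a : ℕ) < (m : ℕ) → (m : ℕ) < b → ∀ c', ρ.upds m ≠ some (x, c')) →
      lastS ρ S ε b x = ind S ε (a : ℕ) := by
  intro b
  induction b with
  | zero => intro _ h; omega
  | succ bw ih =>
    intro hbn hab hno
    have hbw : bw < n := by omega
    simp only [lastS]
    rw [dif_pos hbw]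
    by_cases hab' : (a : ℕ) = bw
    · have heq : (⟨bw, hbw⟩ : Fin n) = a := Fin.ext (by simp [hab'])
      rw [if_pos ⟨c, by rw [heq]; exact ha⟩, hab']
    · have hlt : (a : ℕ) < bw := by omega
      have hne : ¬ ∃ c', ρ.upds ⟨bw, hbw⟩ = some (x, c') := by
        rintro ⟨c', hc'⟩
        exact hno ⟨bw, hbw⟩ (by simpa using hlt) (by simp) c' hc'
      rw [if_neg hne]
      exact ih (by omega) hlt (fun m h1 h2 => hno m h1 (by omega))


/-! ### Construction of the block ending at a given action -/

noncomputable def back (ρ : TimedRun A n) (k : Fin n) : List (Fin n) :=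
  if h : ∃ p, Triggers ρ p k then back ρ (choose h) ++ [k] else [k]
termination_by (k : ℕ)
decreasing_by exact (choose_spec h).1

theorem back_getLast? (ρ : TimedRun A n) (k : Fin n) : (back ρ k).getLast? = some k := by
  rw [back]
  split_ifs with h
  · exact List.getLast?_concat
  · rfl

theorem back_ne_nil (ρ : TimedRun A n) (k : Fin n) : back ρ k ≠ [] := by
  intro h
  simpa [h] using back_getLast? ρ k

theorem back_self_mem (ρ : TimedRun A n) (k : Fin n) : k ∈ back ρ k := by
  rw [back]; split_ifs with h <;> simp

theorem back_chain (ρ : TimedRun A n) (k : Fin n) : List.Chain' (Triggers ρ) (back ρ k) := by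
  rw [back]
  split_ifs with h
  · refine List.isChain_append.mpr ⟨back_chain ρ (choose h), by simp, ?_⟩
    intro x hx y hy
    rw [back_getLast? ρ (choose h)] at hx
    have hx' : choose h = x := by simpa using hx
    have hy' : k = y := by simpa using hy
    rw [← hx', ← hy']
    exact choose_spec h
  · exact List.isChain_singleton k
termination_by (k : ℕ)
decreasing_by exact (choose_spec h).1

theorem back_head (ρ : TimedRun A n) (k : Fin n) :
    ∃ h0, (back ρ k).head? = some h0 ∧ ∀ p, ¬ Triggers ρ p h0 := by
  rw [back]
  split_ifs with h
  · obtain ⟨h0, h1, h2⟩ := back_head ρ (choose h)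
    exact ⟨h0, by simp [List.head?_append, h1], h2⟩
  · exact ⟨k, rfl, fun p hp => h ⟨p, hp⟩⟩
termination_by (k : ℕ)
decreasing_by exact (choose_spec h).1

theorem back_mem_rtg (ρ : TimedRun A n) (k a : Fin n) (ha : a ∈ back ρ k) :
    Relation.ReflTransGen (Triggers ρ) a k := by
  rw [back] at ha
  split_ifs at ha with h
  · rcases List.mem_append.mp ha with ha' | ha'
    · exact (back_mem_rtg ρ (choose h) a ha').tail (choose_spec h)
    · have haa : a = k := by simpa using ha'
      rw [haa]
  · have haa : a = k := by simpa using ha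
    rw [haa]
termination_by (k : ℕ)
decreasing_by exact (choose_spec h).1

theorem back_mem_le (ρ : TimedRun A n) (k a : Fin n) (ha : a ∈ back ρ k) : a ≤ k :=
  rtg_le (back_mem_rtg ρ k a ha)

theorem back_mem_succ (ρ : TimedRun A n) (k a : Fin n) (ha : a ∈ back ρ k) :
    a = k ∨ ∃ b ∈ back ρ k, Triggers ρ a b := by
  rw [back] at ha
  split_ifs at ha with h
  · rcases List.mem_append.mp ha with ha' | ha'
    · rcases back_mem_succ ρ (choose h) a ha' with heq | ⟨b, hb, ht⟩
      · refine Or.inr ⟨k, back_self_mem ρ k, ?_⟩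
        rw [heq]
        exact choose_spec h
      · refine Or.inr ⟨b, ?_, ht⟩
        rw [back, dif_pos h]
        exact List.mem_append_left _ hb
    · exact Or.inl (by simpa using ha')
  · exact Or.inl (by simpa using ha)
termination_by (k : ℕ)
decreasing_by exact (choose_spec h).1

theorem back_mem_pred (ρ : TimedRun A n) (k a p : Fin n) (ha : a ∈ back ρ k)
    (hp : Triggers ρ p a) : p ∈ back ρ k := by
  rw [back] at ha
  split_ifs at ha with h
  · rcases List.mem_append.mp ha with ha' | ha'
    · have := back_mem_pred ρ (choose h) a p ha' hp
      rw [back, dif_pos h]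
      exact List.mem_append_left _ this
    · have haa : a = k := by simpa using ha'
      rw [haa] at hp
      have hpc : p = choose h := triggers_pred_unique hp (choose_spec h)
      rw [back, dif_pos h]
      refine List.mem_append_left _ ?_
      rw [hpc]
      exact back_self_mem ρ (choose h)
  · have haa : a = k := by simpa using ha
    rw [haa] at hp
    exact absurd ⟨p, hp⟩ h
termination_by (k : ℕ)
decreasing_by exact (choose_spec h).1

/-! ### Coincidences -/

def Cprop (ρ : TimedRun A n) (a b : Fin n) : Prop :=
  a < b ∧ ∃ x c, ρ.upds a = some (x, c) ∧ Discards ρ b x ∧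
    (∀ m : Fin n, a < m → m < b → ¬ Discards ρ m x ∧ ρ.acts m ≠ Act.timeout x) ∧
    ρ.vals b.castSucc x - ρ.delays b.castSucc = 0

open Classical in
noncomputable def CF (ρ : TimedRun A n) : Finset (Fin n × Fin n) :=
  Finset.univ.filter (fun p => Cprop ρ p.1 p.2)

theorem mem_CF {ρ : TimedRun A n} {p : Fin n × Fin n} :
    p ∈ CF ρ ↔ Cprop ρ p.1 p.2 := by
  classical
  simp [CF]

theorem no_to_between {ρ : TimedRun A n} {k0 ℓ0 : Fin n} {y : X} {c0 : ℕ+}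
    (hu : ρ.upds k0 = some (y, c0)) (hnt : ∀ m, ¬ Triggers ρ k0 m) (hlt : k0 < ℓ0)
    (hfirst : ∀ m, k0 < m → m < ℓ0 → ¬ Discards ρ m y) :
    ∀ m, k0 < m → m < ℓ0 → ρ.acts m ≠ Act.timeout y := by
  by_contra hcon
  push_neg at hcon
  obtain ⟨m0, hm1, hm2, hm3⟩ := hcon
  classical
  have hTne : (Finset.univ.filter
      (fun m => k0 < m ∧ m < ℓ0 ∧ ρ.acts m = Act.timeout y)).Nonempty :=
    ⟨m0, by simp [hm1, hm2, hm3]⟩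
  set T := Finset.univ.filter (fun m => k0 < m ∧ m < ℓ0 ∧ ρ.acts m = Act.timeout y) with hT
  have hq := Finset.min'_mem T hTne
  set q := T.min' hTne with hqd
  rw [hT, Finset.mem_filter] at hq
  refine hnt q ⟨hq.2.1, y, c0, hu, hq.2.2.2, ?_⟩
  intro p hp1 hp2
  constructor
  · intro hto
    have hpT : p ∈ T := by rw [hT, Finset.mem_filter]; exact ⟨Finset.mem_univ _, hp1, lt_trans hp2 hq.2.2.1, hto⟩
    exact absurd (Finset.min'_le T p hpT) (not_le.mpr hp2)
  · exact hfirst p hp1 (lt_trans hp2 hq.2.2.1)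

theorem cprop_no_trigger {ρ : TimedRun A n} {a b : Fin n} (h : Cprop ρ a b) :
    ∀ m, ¬ Triggers ρ a m := by
  obtain ⟨hab, x, c, hu, hd, hbet, hz⟩ := h
  rintro m ⟨ham, x', c', hu', hact', hbet'⟩
  have hxx : x' = x ∧ c' = c := by rw [hu] at hu'; simpa using hu'.symm
  rw [hxx.1] at hact' hbet'
  rcases lt_trichotomy m b with hc | hc | hc
  · exact (hbet m ham hc).2 hact'
  · rw [hc] at hact'
    exact hd.2.1 hact'
  · exact (hbet' b hab hc).2 hd

/-! ### The key slack estimate for the wiggled run -/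

theorem shift_key (ρ : TimedRun A n) (S : Set (Fin n)) (ε : ℝ)
    (hP : Padded ρ) (hA : AllPos ρ) (hε0 : 0 < ε)
    (hεs : ∀ (j : Fin (n + 1)) (x : X), x ∈ A.χ (ρ.states j) →
      0 < ρ.vals j x - ρ.delays j → ε < ρ.vals j x - ρ.delays j)
    (hS_trig : ∀ a k' : Fin n, Triggers ρ a k' → (a ∈ S ↔ k' ∈ S))
    (hCout : ∀ a b : Fin n, Cprop ρ a b → b ∉ S) :
    ∀ (j : Fin (n + 1)) (x : X), x ∈ A.χ (ρ.states j) →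
      (0 ≤ (ρ.vals j x - ρ.delays j) + (lastS ρ S ε (j : ℕ) x - ind S ε (j : ℕ))) ∧
      (∀ hj : (j : ℕ) < n, ρ.acts ⟨(j : ℕ), hj⟩ = Act.timeout x →
        (ρ.vals j x - ρ.delays j) + (lastS ρ S ε (j : ℕ) x - ind S ε (j : ℕ)) = 0) := by
  intro j x hx
  obtain ⟨a, c, ha1, hu, hbetw⟩ := lastUpdF j x hx
  have hlS : lastS ρ S ε (j : ℕ) x = ind S ε (a : ℕ) :=
    lastS_eq S ε hu (j : ℕ) (by omega) ha1 (fun m h1 h2 => (hbetw m h1 h2).2.2.2)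
  have hsl0 : 0 ≤ ρ.vals j x - ρ.delays j := by
    have := ρ.delays_le j x hx; linarith
  have hto_part : ∀ hj : (j : ℕ) < n, ρ.acts ⟨(j : ℕ), hj⟩ = Act.timeout x →
      ind S ε (a : ℕ) = ind S ε (j : ℕ) ∧ ρ.vals j x - ρ.delays j = 0 := by
    intro hj hact
    have htr : Triggers ρ a ⟨(j : ℕ), hj⟩ := by
      refine ⟨by rw [Fin.lt_def]; exact ha1, x, c, hu, hact, ?_⟩
      intro m hm1 hm2
      have h3 := hbetw m (Fin.lt_def.mp hm1) (Fin.lt_def.mp hm2)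
      exact ⟨h3.2.1, h3.2.2.1⟩
    have hiff := hS_trig a ⟨(j : ℕ), hj⟩ htr
    constructor
    · have hcoe : (j : ℕ) = (((⟨(j : ℕ), hj⟩ : Fin n)) : ℕ) := rfl
      rw [hcoe, ind_coe, ind_coe]
      by_cases hmem : a ∈ S
      · rw [if_pos hmem, if_pos (hiff.mp hmem)]
      · rw [if_neg hmem, if_neg (fun hh => hmem (hiff.mpr hh))]
    · have hz := ρ.timeout_zero ⟨(j : ℕ), hj⟩ x hact
      have hcast : (⟨(j : ℕ), hj⟩ : Fin n).castSucc = j := Fin.ext (by simp)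
      rw [hcast] at hz
      exact hz
  rcases eq_or_lt_of_le hsl0 with hz | hpos
  swap
  · constructor
    · have h1 := hεs j x hx hpos
      have h2 : 0 ≤ ind S ε (a : ℕ) := ind_nonneg hε0.le _
      have h3 : ind S ε (j : ℕ) ≤ ε := ind_le hε0.le _
      rw [hlS]
      linarith
    · intro hj hact
      exfalso
      have := (hto_part hj hact).2
      linarith
  · -- slack = 0
    by_cases hjn : (j : ℕ) < n
    · by_cases hact : ρ.acts ⟨(j : ℕ), hjn⟩ = Act.timeout x
      · have h1 := hto_part hjn hact
        constructor
        · rw [hlS, h1.1]; linarith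
        · intro hj' hact'
          rw [hlS, h1.1]
          linarith
      · constructor
        · by_cases hdisc : Discards ρ ⟨(j : ℕ), hjn⟩ x
          · have hcastj : (⟨(j : ℕ), hjn⟩ : Fin n).castSucc = j := Fin.ext (by simp)
            have hcp : Cprop ρ a ⟨(j : ℕ), hjn⟩ := by
              refine ⟨Fin.lt_def.mpr ha1, x, c, hu, hdisc, ?_, ?_⟩
              · intro m h1 h2
                have h3 := hbetw m (Fin.lt_def.mp h1) (Fin.lt_def.mp h2)
                exact ⟨h3.2.2.1, h3.2.1⟩
              · rw [hcastj]; linarith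
            have hnotS : (⟨(j : ℕ), hjn⟩ : Fin n) ∉ S := hCout _ _ hcp
            have hindj : ind S ε (j : ℕ) = 0 := ind_of_not_mem hnotS
            have h2 : 0 ≤ ind S ε (a : ℕ) := ind_nonneg hε0.le _
            rw [hlS, hindj]
            linarith
          · exfalso
            have hcastj : (⟨(j : ℕ), hjn⟩ : Fin n).castSucc = j := Fin.ext (by simp)
            have hxc : x ∈ A.χ (ρ.states ((⟨(j : ℕ), hjn⟩ : Fin n).castSucc)) := by
              rw [hcastj]; exact hx
            have hnor : ¬ (x ∉ A.χ (ρ.states ((⟨(j : ℕ), hjn⟩ : Fin n).succ)) ∨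
                ∃ c', ρ.upds ⟨(j : ℕ), hjn⟩ = some (x, c')) :=
              fun hor => hdisc ⟨hxc, hact, hor⟩
            push_neg at hnor
            obtain ⟨hmem_succ, hnoupd⟩ := hnor
            have hval : ρ.vals ((⟨(j : ℕ), hjn⟩ : Fin n).succ) x =
                ρ.vals ((⟨(j : ℕ), hjn⟩ : Fin n).castSucc) x -
                  ρ.delays ((⟨(j : ℕ), hjn⟩ : Fin n).castSucc) := by
              rw [ρ.val_step ⟨(j : ℕ), hjn⟩ x]
              rcases hup : ρ.upds ⟨(j : ℕ), hjn⟩ with _ | ⟨z, c'⟩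
              · rfl
              · rw [Option.elim_some]
                have hzx : ¬ x = z := fun h => hnoupd c' (by rw [hup, h])
                rw [if_neg hzx]
            have hle := ρ.delays_le ((⟨(j : ℕ), hjn⟩ : Fin n).succ) x hmem_succ
            have hpos2 := hA ((⟨(j : ℕ), hjn⟩ : Fin n).succ)
            rw [hval, hcastj] at hle
            linarith
        · intro hj' hact'
          exfalso
          exact hact (by convert hact')
    · -- j is the last index
      exfalso
      have hjl : j = Fin.last n := Fin.ext (by
        have := j.isLt
        simp only [Fin.val_last]
        omega)
      rw [hjl] at hz hx
      exact hP.2.2 x hx hz.symm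

/-! ### Construction of the wiggled run -/

theorem construct (ρ : TimedRun A n) (S : Set (Fin n)) (ε : ℝ)
    (hP : Padded ρ) (hA : AllPos ρ) (hε0 : 0 < ε)
    (hεd : ∀ j, ε < ρ.delays j)
    (hεs : ∀ (j : Fin (n + 1)) (x : X), x ∈ A.χ (ρ.states j) →
      0 < ρ.vals j x - ρ.delays j → ε < ρ.vals j x - ρ.delays j)
    (hS_trig : ∀ a k' : Fin n, Triggers ρ a k' → (a ∈ S ↔ k' ∈ S))
    (hCout : ∀ a b : Fin n, Cprop ρ a b → b ∉ S) :
    ∃ ρ' : TimedRun A n,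
      ρ'.states = ρ.states ∧ ρ'.acts = ρ.acts ∧ ρ'.upds = ρ.upds ∧
      (∀ j, ρ'.delays j = wiggledDelay ρ S ε j) ∧
      (∀ (j : Fin (n + 1)) (y : X), ρ'.vals j y =
        ρ.vals j y + lastS ρ S ε (j : ℕ) y - indP S ε (j : ℕ)) ∧
      Padded ρ' ∧ AllPos ρ' := by
  have hkey := shift_key ρ S ε hP hA hε0 hεs hS_trig hCout
  have hwpos : ∀ j, 0 < wiggledDelay ρ S ε j := by
    intro j
    rw [wd_eq]
    have h1 := hεd j
    have h2 := ind_nonneg (S := S) hε0.le (j : ℕ)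
    have h3 := indP_le (S := S) hε0.le (j : ℕ)
    linarith
  have hvals_eq : ∀ (j : Fin (n + 1)) (y : X), wv ρ S ε (j : ℕ) y =
      ρ.vals j y + lastS ρ S ε (j : ℕ) y - indP S ε (j : ℕ) := by
    intro j y
    have := wv_eq ρ S ε (j : ℕ) j.isLt y
    have hj : (⟨(j : ℕ), j.isLt⟩ : Fin (n + 1)) = j := Fin.ext rfl
    rw [hj] at this
    exact this
  have hdle : ∀ (j : Fin (n + 1)) (x : X), x ∈ A.χ (ρ.states j) →
      wiggledDelay ρ S ε j ≤ wv ρ S ε (j : ℕ) x := by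
    intro j x hx
    rw [wd_eq, hvals_eq]
    have := (hkey j x hx).1
    linarith
  refine ⟨⟨ρ.states, fun j => wv ρ S ε (j : ℕ), fun j => wiggledDelay ρ S ε j,
    ρ.acts, ρ.upds, ρ.init_state, fun x => rfl, fun j => (hwpos j).le, hdle, ρ.trans,
    ?_, ?_⟩, rfl, rfl, rfl, fun j => rfl, hvals_eq, ?_, ?_⟩
  · -- timeout_zero
    intro k x hact
    have hxact : x ∈ A.χ (ρ.states k.castSucc) := timeout_active hact
    have hcast : (⟨((k.castSucc : Fin (n + 1)) : ℕ), by simpa using k.isLt⟩ : Fin n) = k :=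
      Fin.ext (by simp)
    have h2 := (hkey k.castSucc x hxact).2 (by simpa using k.isLt) (by rw [hcast]; exact hact)
    show wv ρ S ε ((k.castSucc : Fin (n + 1)) : ℕ) x - wiggledDelay ρ S ε k.castSucc = 0
    rw [wd_eq, hvals_eq]
    linarith
  · -- val_step
    intro k y
    show wv ρ S ε ((k.succ : Fin (n + 1)) : ℕ) y = _
    have hsv : ((k.succ : Fin (n + 1)) : ℕ) = (k : ℕ) + 1 := rfl
    rw [hsv]
    simp only [wv]
    rw [dif_pos k.isLt]
    have hke : (⟨(k : ℕ), k.isLt⟩ : Fin n) = k := Fin.ext rfl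
    rw [hke]
    rfl
  · -- Padded
    refine ⟨hwpos 0, hwpos (Fin.last n), ?_⟩
    intro x hx
    have hsl : 0 ≤ ρ.vals (Fin.last n) x - ρ.delays (Fin.last n) := by
      have := ρ.delays_le (Fin.last n) x hx; linarith
    have hne := hP.2.2 x hx
    have hpos : 0 < ρ.vals (Fin.last n) x - ρ.delays (Fin.last n) := by
      rcases eq_or_lt_of_le hsl with h | h
      · exact absurd h.symm hne
      · exact h
    have hlast : ((Fin.last n : Fin (n + 1)) : ℕ) = n := rfl
    have hind : ind S ε ((Fin.last n : Fin (n + 1)) : ℕ) = 0 := by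
      rw [hlast]; exact ind_ge le_rfl
    have hlS : 0 ≤ lastS ρ S ε ((Fin.last n : Fin (n + 1)) : ℕ) x := lastS_nonneg hε0.le _ _
    show wv ρ S ε ((Fin.last n : Fin (n + 1)) : ℕ) x - wiggledDelay ρ S ε (Fin.last n) ≠ 0
    rw [wd_eq, hvals_eq, hind]
    intro habs
    linarith
  · exact hwpos

/-! ### Race helpers -/

theorem no_trigger_of_clauses {ρ : TimedRun A n} {a b : Fin n} {x : X} {c : ℕ+}
    (hab : a < b) (hu : ρ.upds a = some (x, c)) (hd : Discards ρ b x)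
    (hbet : ∀ m : Fin n, a < m → m < b → ¬ Discards ρ m x ∧ ρ.acts m ≠ Act.timeout x) :
    ∀ m, ¬ Triggers ρ a m := by
  rintro m ⟨ham, x', c', hu', hact', hbet'⟩
  have hxx : x' = x ∧ c' = c := by rw [hu] at hu'; simpa using hu'.symm
  rw [hxx.1] at hact' hbet'
  rcases lt_trichotomy m b with hc | hc | hc
  · exact (hbet m ham hc).2 hact'
  · rw [hc] at hact'
    exact hd.2.1 hact'
  · exact (hbet' b hab hc).2 hd

theorem fate_unique {ρ : TimedRun A n} {ks : List (Fin n)} {γ γ' : Fate}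
    (hne : ks ≠ []) (h1 : FateOf ρ ks γ) (h2 : FateOf ρ ks γ') : γ = γ' := by
  have hk : ks.getLast? = some (ks.getLast hne) := List.getLast?_eq_getLast hne
  set k := ks.getLast hne
  have c1 := h1 k hk
  have c2 := h2 k hk
  rcases hu : ρ.upds k with _ | ⟨x, c⟩
  · rw [c1.1 hu, c2.1 hu]
  · by_cases hD : DiscardedAtZeroAfter ρ k x
    · rw [(c1.2 x c hu).1 hD, (c2.2 x c hu).1 hD]
    · rw [(c1.2 x c hu).2 hD, (c2.2 x c hu).2 hD]

theorem first_discard_unique {ρ : TimedRun A n} {k ℓ1 ℓ2 : Fin n} {x : X}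
    (h1 : k < ℓ1) (h2 : k < ℓ2) (d1 : Discards ρ ℓ1 x) (d2 : Discards ρ ℓ2 x)
    (f1 : ∀ m, k < m → m < ℓ1 → ¬ Discards ρ m x)
    (f2 : ∀ m, k < m → m < ℓ2 → ¬ Discards ρ m x) : ℓ1 = ℓ2 := by
  rcases lt_trichotomy ℓ1 ℓ2 with h | h | h
  · exact absurd d1 (f2 ℓ1 h1 h)
  · exact h
  · exact absurd d2 (f1 ℓ2 h2 h)

theorem fate_disc0 {ρ : TimedRun A n} {ks : List (Fin n)} {γ : Fate} {k : Fin n} {x : X}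
    {c : ℕ+} (hfate : FateOf ρ ks γ) (hγ : γ = Fate.disc0) (hlast : ks.getLast? = some k)
    (hu : ρ.upds k = some (x, c)) : DiscardedAtZeroAfter ρ k x := by
  by_contra hnD
  have hcr := ((hfate k hlast).2 x c hu).2 hnD
  rw [hγ] at hcr
  simp at hcr

theorem prec_to_C {ρ : TimedRun A n} (hA : AllPos ρ) {B B' : List (Fin n) × Fate}
    (h2 : IsBlock ρ B'.1 B'.2) (hp : Prec ρ B B') :
    ∃ a b, Cprop ρ a b := by
  rcases hp with ⟨kk, hk, k', hk', hlt, hdz⟩ | ⟨hγ, k', x, c, hlast, hu, ℓ, hℓ, hkl, hD, hfirst⟩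
  · exact absurd hdz (ne_of_gt (delayBetween_pos hA hlt))
  · obtain ⟨hBne, hchain, hhead, hmax, hfate⟩ := h2
    have hD0 : DiscardedAtZeroAfter ρ k' x := fate_disc0 hfate hγ hlast hu
    obtain ⟨ℓ0, hl1, hl2, hl3, hl4⟩ := hD0
    have hnt : ∀ m, ¬ Triggers ρ k' m := fun m ht => hmax k' m hlast ht
    have hnto := no_to_between hu hnt hl1 hl3
    exact ⟨k', ℓ0, hl1, x, c, hu, hl2,
      (fun m hm1 hm2 => ⟨hl3 m hm1 hm2, hnto m hm1 hm2⟩), hl4⟩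

theorem race_to_C {ρ : TimedRun A n} (hA : AllPos ρ) (hr : HasRace ρ) :
    ∃ a b, Cprop ρ a b := by
  obtain ⟨B, B', h1, h2, hne, hrace⟩ := hr
  rcases hrace with hp | hp
  · exact prec_to_C hA h2 hp
  · exact prec_to_C hA h1 hp

theorem noRace_of_noC {ρ : TimedRun A n} (hA : AllPos ρ) (hC : ¬ ∃ a b, Cprop ρ a b) :
    ¬ HasRace ρ := fun hr => hC (race_to_C hA hr)

/-! ### One wiggle step -/

theorem wiggle_step_exists [Fintype X] (ρ : TimedRun A n) (hP : Padded ρ) (hA : AllPos ρ)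
    (hCne : ∃ a b, Cprop ρ a b) :
    ∃ ρ₁ : TimedRun A n, WiggleStep ρ ρ₁ ∧ Padded ρ₁ ∧ AllPos ρ₁ ∧
      untime ρ₁ = untime ρ ∧ (CF ρ₁).card < (CF ρ).card := by
  classical
  obtain ⟨a0, b0, hC0⟩ := hCne
  -- minimal first coordinate of a coincidence
  set Fst := (CF ρ).image Prod.fst with hFstDef
  have hFne : Fst.Nonempty := ⟨a0, Finset.mem_image.mpr ⟨(a0, b0), mem_CF.mpr hC0, rfl⟩⟩
  set k := Fst.min' hFne with hkdef
  have hkmem : k ∈ Fst := Finset.min'_mem _ _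
  obtain ⟨p, hpC, hpk⟩ := Finset.mem_image.mp hkmem
  have hCk : Cprop ρ k p.2 := by rw [← hpk]; exact mem_CF.mp hpC
  set ℓ := p.2 with hℓdef
  have hmin : ∀ a b : Fin n, Cprop ρ a b → k ≤ a := by
    intro a b h
    exact Finset.min'_le _ _ (Finset.mem_image.mpr ⟨(a, b), mem_CF.mpr h, rfl⟩)
  obtain ⟨hkl, x, c, hu, hD, hbet, hz⟩ := hCk
  -- the block of k
  set ks := back ρ k with hksdef
  set S : Set (Fin n) := {m | m ∈ ks} with hSdef
  have hnt : ∀ m, ¬ Triggers ρ k m := no_trigger_of_clauses hkl hu hD hbet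
  have hS_max : ∀ a, a ∈ S → a ≤ k := fun a ha => back_mem_le ρ k a ha
  have hkS : k ∈ S := back_self_mem ρ k
  have hS_trig : ∀ a k' : Fin n, Triggers ρ a k' → (a ∈ S ↔ k' ∈ S) := by
    intro a k' ht
    constructor
    · intro haS
      rcases back_mem_succ ρ k a haS with heq | ⟨b, hb, htb⟩
      · exact absurd (heq ▸ ht) (hnt k')
      · rw [triggers_succ_unique ht htb]
        exact hb
    · intro hk'S
      exact back_mem_pred ρ k k' a hk'S ht
  have hCout : ∀ a b : Fin n, Cprop ρ a b → b ∉ S := by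
    intro a b hab hbS
    exact absurd (lt_of_le_of_lt (hmin a b hab) (lt_of_lt_of_le hab.1 (hS_max b hbS)))
      (lt_irrefl k)
  -- choice of ε
  set Dels : Finset ℝ := Finset.univ.image (fun j : Fin (n + 1) => ρ.delays j) with hDelsDef
  set Slks : Finset ℝ := ((Finset.univ : Finset (Fin (n + 1) × X)).filter
      (fun q => q.2 ∈ A.χ (ρ.states q.1) ∧ 0 < ρ.vals q.1 q.2 - ρ.delays q.1)).image
      (fun q => ρ.vals q.1 q.2 - ρ.delays q.1) with hSlksDef
  set F := Dels ∪ Slks with hFDef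
  have hFne2 : F.Nonempty :=
    ⟨ρ.delays 0, Finset.mem_union_left _ (Finset.mem_image.mpr ⟨0, Finset.mem_univ _, rfl⟩)⟩
  have hFpos : ∀ r ∈ F, 0 < r := by
    intro r hr
    rcases Finset.mem_union.mp hr with h | h
    · obtain ⟨j, -, rfl⟩ := Finset.mem_image.mp h
      exact hA j
    · obtain ⟨q, hq, rfl⟩ := Finset.mem_image.mp h
      exact (Finset.mem_filter.mp hq).2.2
  set ε := F.min' hFne2 / 2 with hεdef
  have hminpos : 0 < F.min' hFne2 := hFpos _ (Finset.min'_mem _ _)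
  have hε0 : 0 < ε := by rw [hεdef]; linarith
  have hεlt : ∀ r ∈ F, ε < r := by
    intro r hr
    have := Finset.min'_le F r hr
    rw [hεdef]; linarith
  have hεd : ∀ j, ε < ρ.delays j := fun j =>
    hεlt _ (Finset.mem_union_left _ (Finset.mem_image.mpr ⟨j, Finset.mem_univ _, rfl⟩))
  have hεs : ∀ (j : Fin (n + 1)) (y : X), y ∈ A.χ (ρ.states j) →
      0 < ρ.vals j y - ρ.delays j → ε < ρ.vals j y - ρ.delays j := by
    intro j y hy hpos
    exact hεlt _ (Finset.mem_union_right _ (Finset.mem_image.mpr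
      ⟨(j, y), Finset.mem_filter.mpr ⟨Finset.mem_univ _, hy, hpos⟩, rfl⟩))
  -- the wiggled run
  obtain ⟨ρ₁, hs, ha, hup, hdel, hval, hPad1, hA1⟩ :=
    construct ρ S ε hP hA hε0 hεd hεs hS_trig hCout
  -- generic value computation at a first discard
  have hvalc : ∀ (a b : Fin n) (y : X) (cy : ℕ+), ρ.upds a = some (y, cy) → a < b →
      (∀ m, a < m → m < b → ¬ Discards ρ m y ∧ ρ.acts m ≠ Act.timeout y) →
      ρ₁.vals b.castSucc y - ρ₁.delays b.castSucc =
        (ρ.vals b.castSucc y - ρ.delays b.castSucc) + (ind S ε (a : ℕ) - ind S ε (b : ℕ)) := by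
    intro a b y cy huy hab hbets
    have hnoupd := noUpdBetween huy
      (fun m h1 h2 => ⟨(hbets m h1 h2).2, (hbets m h1 h2).1⟩)
    have hcoe : ((b.castSucc : Fin (n + 1)) : ℕ) = (b : ℕ) := rfl
    have hlS : lastS ρ S ε ((b.castSucc : Fin (n + 1)) : ℕ) y = ind S ε (a : ℕ) := by
      rw [hcoe]
      exact lastS_eq S ε huy (b : ℕ) b.isLt.le (Fin.lt_def.mp hab)
        (fun m h1 h2 => hnoupd m (Fin.lt_def.mpr h1) (Fin.lt_def.mpr h2))
    rw [hval b.castSucc y, hdel b.castSucc, wd_eq, hlS, hcoe]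
    ring
  have hεne : ε ≠ 0 := ne_of_gt hε0
  -- at the first discard of x after k the new value is ε
  have hℓS : ℓ ∉ S := fun h =>
    absurd (lt_of_lt_of_le hkl (hS_max ℓ h)) (lt_irrefl k)
  have hKNE : ∀ ℓ0 : Fin n, k < ℓ0 → Discards ρ ℓ0 x →
      (∀ m, k < m → m < ℓ0 → ¬ Discards ρ m x) →
      ρ₁.vals ℓ0.castSucc x - ρ₁.delays ℓ0.castSucc = ε := by
    intro ℓ0 h1 h2 h3
    have hl0 : ℓ0 = ℓ := first_discard_unique h1 hkl h2 hD h3 (fun m a b => (hbet m a b).1)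
    rw [hl0, hvalc k ℓ x c hu hkl hbet, hz, ind_of_mem hkS, ind_of_not_mem hℓS]
    ring
  -- the block as a block of ρ
  have hD0 : DiscardedAtZeroAfter ρ k x := ⟨ℓ, hkl, hD, fun m h1 h2 => (hbet m h1 h2).1, hz⟩
  have hlastks : ks.getLast? = some k := back_getLast? ρ k
  have hblock : IsBlock ρ ks Fate.disc0 := by
    refine ⟨back_ne_nil ρ k, back_chain ρ k, ?_, ?_, ?_⟩
    · intro k0 hk0
      obtain ⟨h0, hh1, hh2⟩ := back_head ρ k
      rw [hh1] at hk0
      have hk00 : h0 = k0 := by simpa using hk0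
      rw [← hk00]
      rcases hact0 : ρ.acts h0 with i | y
      · exact ⟨i, rfl⟩
      · obtain ⟨p', hp'⟩ := timeout_trigger hact0
        exact absurd hp' (hh2 p')
    · intro kk k' hlast
      have hkk : k = kk := by rw [hlastks] at hlast; simpa using hlast
      rw [← hkk]
      exact hnt k'
    · intro kk hlast
      have hkk : k = kk := by rw [hlastks] at hlast; simpa using hlast
      rw [← hkk]
      constructor
      · intro hnone
        rw [hu] at hnone
        cases hnone
      · intro x' c' hux'
        have hxx : x' = x ∧ c' = c := by rw [hu] at hux'; simpa using hux'.symm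
        rw [hxx.1]
        exact ⟨fun _ => rfl, fun hnd => absurd hD0 hnd⟩
  -- transport lemmas
  have hDis : ∀ (m : Fin n) (y : X), Discards ρ₁ m y ↔ Discards ρ m y :=
    discards_congr hs ha hup
  have hTrig : ∀ a b : Fin n, Triggers ρ₁ a b ↔ Triggers ρ a b :=
    triggers_congr hs ha hup
  -- the no-race property of the shifted block
  have hnorace : ∀ (γ₁ : Fate) (ks₂ : List (Fin n)) (γ₂ : Fate),
      IsBlock ρ₁ ks γ₁ → IsBlock ρ₁ ks₂ γ₂ → (ks, γ₁) ≠ (ks₂, γ₂) →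
        ¬ BlocksRace ρ₁ (ks, γ₁) (ks₂, γ₂) := by
    intro γ₁ ks₂ γ₂ hB1 hB2 hne12 hrace
    by_cases hkseq : ks₂ = ks
    · subst hkseq
      exact hne12 (by rw [fate_unique (back_ne_nil ρ k) hB1.2.2.2.2 hB2.2.2.2.2])
    rcases hrace with hp | hp
    · -- Prec ρ₁ (ks, γ₁) (ks₂, γ₂) : an action of ks discards the timer of ks₂ at zero
      rcases hp with ⟨kk, hkkm, k'', hk''m, hlt2, hdb⟩ |
        ⟨hγ2, k₂, y, c₂, hlast₂, hu₂, ℓ', hℓ'mem, hk₂ℓ', hD', hfirst'⟩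
      · exact absurd hdb (ne_of_gt (delayBetween_pos hA1 hlt2))
      · -- fate of ks₂ is disc0
        have hu₂ρ : ρ.upds k₂ = some (y, c₂) := by rw [← hup]; exact hu₂
        obtain ⟨ℓ₂, m1, m2, m3, m4⟩ :=
          fate_disc0 hB2.2.2.2.2 hγ2 hlast₂ hu₂
        have m2ρ : Discards ρ ℓ₂ y := (hDis _ _).mp m2
        have m3ρ : ∀ m, k₂ < m → m < ℓ₂ → ¬ Discards ρ m y :=
          fun m h1 h2 hd => m3 m h1 h2 ((hDis _ _).mpr hd)
        have hnt₂ : ∀ m, ¬ Triggers ρ k₂ m := by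
          intro m ht
          exact hB2.2.2.2.1 k₂ m hlast₂ ((hTrig _ _).mpr ht)
        have hnto₂ := no_to_between hu₂ρ hnt₂ m1 m3ρ
        have hvℓ₂ := hvalc k₂ ℓ₂ y c₂ hu₂ρ m1 (fun m h1 h2 => ⟨m3ρ m h1 h2, hnto₂ m h1 h2⟩)
        by_cases hk₂S : k₂ ∈ S
        · -- then k₂ = k and the timer is x : contradiction with value ε
          have hk₂k : k₂ = k := by
            rcases back_mem_succ ρ k k₂ hk₂S with heq | ⟨b, hb, htb⟩
            · exact heq
            · exact absurd htb (hnt₂ b)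
          subst hk₂k
          have hyx : y = x ∧ c₂ = c := by rw [hu] at hu₂ρ; simpa using hu₂ρ.symm
          rw [hyx.1] at m2ρ m3ρ
          have hKv := hKNE ℓ₂ m1 m2ρ m3ρ
          rw [← hyx.1] at hKv
          rw [m4] at hKv
          exact hεne hKv.symm
        · -- the discard happens inside the shifted block : value old - ε ≠ 0
          have hD'ρ : Discards ρ ℓ' y := (hDis _ _).mp hD'
          have hfirst'ρ : ∀ m, k₂ < m → m < ℓ' → ¬ Discards ρ m y :=
            fun m h1 h2 hd => hfirst' m h1 h2 ((hDis _ _).mpr hd)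
          have hℓ'₂ : ℓ' = ℓ₂ := first_discard_unique hk₂ℓ' m1 hD'ρ m2ρ hfirst'ρ m3ρ
          have hℓ₂S : ℓ₂ ∈ S := by rw [← hℓ'₂]; exact hℓ'mem
          have hyact : y ∈ A.χ (ρ.states ℓ₂.castSucc) := m2ρ.1
          have hold : 0 ≤ ρ.vals ℓ₂.castSucc y - ρ.delays ℓ₂.castSucc := by
            have := ρ.delays_le ℓ₂.castSucc y hyact; linarith
          have holdne : ρ.vals ℓ₂.castSucc y - ρ.delays ℓ₂.castSucc ≠ 0 := by
            intro h0
            exact hCout k₂ ℓ₂ ⟨m1, y, c₂, hu₂ρ, m2ρ,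
              (fun m h1 h2 => ⟨m3ρ m h1 h2, hnto₂ m h1 h2⟩), h0⟩ hℓ₂S
          have holdpos : 0 < ρ.vals ℓ₂.castSucc y - ρ.delays ℓ₂.castSucc :=
            lt_of_le_of_ne hold (Ne.symm holdne)
          have hεold := hεs ℓ₂.castSucc y hyact holdpos
          rw [hvℓ₂, ind_of_not_mem hk₂S, ind_of_mem hℓ₂S] at m4
          linarith
    · -- Prec ρ₁ (ks₂, γ₂) (ks, γ₁) : the timer of ks is discarded at zero — impossible
      rcases hp with ⟨kk, hkkm, k'', hk''m, hlt2, hdb⟩ |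
        ⟨hγ1, k₁, x₁, c₁, hlast₁, hu₁, ℓ'', hℓ''mem, hlt'', hD'', hfirst''⟩
      · exact absurd hdb (ne_of_gt (delayBetween_pos hA1 hlt2))
      · have hk₁k : k = k₁ := by rw [hlastks] at hlast₁; simpa using hlast₁
        rw [← hk₁k] at hu₁
        have hu₁ρ : ρ.upds k = some (x₁, c₁) := by rw [← hup]; exact hu₁
        have hxx : x₁ = x ∧ c₁ = c := by rw [hu] at hu₁ρ; simpa using hu₁ρ.symm
        obtain ⟨ℓ₂, m1, m2, m3, m4⟩ := fate_disc0 hB1.2.2.2.2 hγ1 hlastks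
          (by rw [hup, hu₁ρ, hxx.1, hxx.2])
        have m2ρ : Discards ρ ℓ₂ x := (hDis _ _).mp m2
        have m3ρ : ∀ m, k < m → m < ℓ₂ → ¬ Discards ρ m x :=
          fun m h1 h2 hd => m3 m h1 h2 ((hDis _ _).mpr hd)
        have := hKNE ℓ₂ m1 m2ρ m3ρ
        rw [m4] at this
        exact hεne this.symm
  -- membership decrement for CF
  have hsub : ∀ q ∈ CF ρ₁, q ∈ CF ρ ∧ q ≠ (k, ℓ) := by
    intro q hq
    obtain ⟨hab, y, cy, huy, hdy, hbety, hzy⟩ := mem_CF.mp hq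
    have huyρ : ρ.upds q.1 = some (y, cy) := by rw [← hup]; exact huy
    have hdyρ : Discards ρ q.2 y := (hDis _ _).mp hdy
    have hbetyρ : ∀ m, q.1 < m → m < q.2 → ¬ Discards ρ m y ∧ ρ.acts m ≠ Act.timeout y := by
      intro m h1 h2
      refine ⟨fun hd => (hbety m h1 h2).1 ((hDis _ _).mpr hd), ?_⟩
      rw [← ha]
      exact (hbety m h1 h2).2
    have hv := hvalc q.1 q.2 y cy huyρ hab hbetyρ
    by_cases haS : q.1 ∈ S
    · exfalso
      have hntq : ∀ m, ¬ Triggers ρ q.1 m := no_trigger_of_clauses hab huyρ hdyρ hbetyρ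
      have hq1k : q.1 = k := by
        rcases back_mem_succ ρ k q.1 haS with heq | ⟨b, hb, htb⟩
        · exact heq
        · exact absurd htb (hntq b)
      rw [hq1k] at huyρ hab
      have hyx : y = x ∧ cy = c := by rw [hu] at huyρ; simpa using huyρ.symm
      have hbx : Discards ρ q.2 x := hyx.1 ▸ hdyρ
      have hbetx : ∀ m, k < m → m < q.2 → ¬ Discards ρ m x := by
        intro m h1 h2
        rw [← hq1k] at h1
        exact fun hd => (hbetyρ m h1 h2).1 (hyx.1 ▸ hd)
      have := hKNE q.2 hab hbx hbetx
      rw [← hyx.1] at this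
      rw [hzy] at this
      exact hεne this.symm
    · by_cases hbS : q.2 ∈ S
      · exfalso
        have hyact : y ∈ A.χ (ρ.states q.2.castSucc) := hdyρ.1
        have hold : ρ.vals q.2.castSucc y - ρ.delays q.2.castSucc = ε := by
          rw [ind_of_not_mem haS, ind_of_mem hbS] at hv
          rw [hzy] at hv
          linarith
        have holdpos : 0 < ρ.vals q.2.castSucc y - ρ.delays q.2.castSucc := by
          rw [hold]; exact hε0
        have := hεs q.2.castSucc y hyact holdpos
        rw [hold] at this
        exact lt_irrefl ε this
      · have hzρ : ρ.vals q.2.castSucc y - ρ.delays q.2.castSucc = 0 := by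
          rw [ind_of_not_mem haS, ind_of_not_mem hbS] at hv
          rw [hzy] at hv
          linarith
        refine ⟨mem_CF.mpr ⟨hab, y, cy, huyρ, hdyρ, hbetyρ, hzρ⟩, ?_⟩
        intro heq
        rw [heq] at haS
        exact haS hkS
  have hsubset : CF ρ₁ ⊆ CF ρ := fun q hq => (hsub q hq).1
  have hklC : (k, ℓ) ∈ CF ρ := mem_CF.mpr ⟨hkl, x, c, hu, hD, hbet, hz⟩
  have hklN : (k, ℓ) ∉ CF ρ₁ := fun hq => (hsub _ hq).2 rfl
  have hcard : (CF ρ₁).card < (CF ρ).card :=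
    Finset.card_lt_card ⟨hsubset, fun hsup => hklN (hsup hklC)⟩
  have huntime : untime ρ₁ = untime ρ := by
    unfold untime
    rw [hs, ha]
  exact ⟨ρ₁, ⟨ks, Fate.disc0, ε, hεne, hblock, ⟨hs, ha, hup, hdel⟩, hPad1, hnorace⟩,
    hPad1, hA1, huntime, hcard⟩

/-! ### Iterating wiggle steps -/

theorem master [Fintype X] : ∀ (N : ℕ) (ρ : TimedRun A n), Padded ρ → AllPos ρ →
    (CF ρ).card ≤ N →
    ∃ ρ' : TimedRun A n, Relation.ReflTransGen WiggleStep ρ ρ' ∧ Padded ρ' ∧ AllPos ρ' ∧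
      ¬ HasRace ρ' ∧ untime ρ' = untime ρ := by
  intro N
  induction N with
  | zero =>
    intro ρ hP hA hc
    refine ⟨ρ, Relation.ReflTransGen.refl, hP, hA, ?_, rfl⟩
    apply noRace_of_noC hA
    rintro ⟨a, b, hab⟩
    have hmem : (a, b) ∈ CF ρ := mem_CF.mpr hab
    have := Finset.card_pos.mpr ⟨_, hmem⟩
    omega
  | succ N ih =>
    intro ρ hP hA hc
    by_cases hCe : ∃ a b, Cprop ρ a b
    · obtain ⟨ρ₁, hstep, hP1, hA1, hut, hcard⟩ := wiggle_step_exists ρ hP hA hCe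
      obtain ⟨ρ', hrtg, hP', hA', hnr, hut'⟩ := ih ρ₁ hP1 hA1 (by omega)
      exact ⟨ρ', Relation.ReflTransGen.head hstep hrtg, hP', hA', hnr, by rw [hut', hut]⟩
    · exact ⟨ρ, Relation.ReflTransGen.refl, hP, hA, noRace_of_noC hA hCe, rfl⟩

/-! ### Acyclicity of the block graph -/

theorem le_getLast_of_chain' {l : List (Fin n)} (h : List.Chain' (· < ·) l) :
    ∀ a ∈ l, ∀ k, l.getLast? = some k → a ≤ k := by
  induction l with
  | nil => simp
  | cons b t iht =>
    intro a ha k hk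
    cases t with
    | nil =>
      have ha' : a = b := by simpa using ha
      have hk' : b = k := by simpa using hk
      rw [ha', hk']
    | cons c t' =>
      rw [List.getLast?_cons_cons] at hk
      have hbc : b < c := (List.isChain_cons_cons.mp h).1
      have hch : List.Chain' (· < ·) (c :: t') := (List.isChain_cons_cons.mp h).2
      rcases List.mem_cons.mp ha with rfl | ha'
      · have : c ≤ k := iht hch c (List.mem_cons_self) k hk
        exact le_of_lt (lt_of_lt_of_le hbc this)
      · exact iht hch a ha' k hk

theorem no_cycle {ρ : TimedRun A n} (hA : AllPos ρ) : ¬ HasCycle ρ := by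
  rintro ⟨m, f, hm, hblocks, hcyc, hedges⟩
  have hne : ∀ j, (f j).1 ≠ [] := fun j => (hblocks j).1
  set g : Fin (m + 1) → Fin n := fun j => (f j).1.getLast (hne j) with hg
  have hglast : ∀ j, (f j).1.getLast? = some (g j) := fun j => List.getLast?_eq_getLast _
  have hdec : ∀ j : Fin m, g j.succ < g j.castSucc := by
    intro j
    rcases hedges j with ⟨kk, hkk, k'', hk'', hlt, hdb⟩ |
      ⟨hγ, k', x, c, hlast, hu, ℓ, hℓ, hkl, hD, hfirst⟩
    · exact absurd hdb (ne_of_gt (delayBetween_pos hA hlt))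
    · have hk' : g j.succ = k' := by
        rw [hglast j.succ] at hlast
        simpa using hlast
      have hchain : List.Chain' (· < ·) (f j.castSucc).1 :=
        List.IsChain.imp (fun a b h => h.1) (hblocks j.castSucc).2.1
      have hle : ℓ ≤ g j.castSucc := le_getLast_of_chain' hchain ℓ hℓ _ (hglast _)
      rw [hk']
      exact lt_of_lt_of_le hkl hle
  have hmono : ∀ i : ℕ, ∀ hi : i ≤ m,
      g ⟨i, by omega⟩ ≤ g 0 ∧ (0 < i → g ⟨i, by omega⟩ < g 0) := by
    intro i
    induction i with
    | zero =>
      intro hi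
      exact ⟨le_refl _, fun h => absurd h (lt_irrefl 0)⟩
    | succ iw ihw =>
      intro hi
      have hiw : iw ≤ m := by omega
      have hlt : g ⟨iw + 1, by omega⟩ < g ⟨iw, by omega⟩ := hdec ⟨iw, by omega⟩
      exact ⟨le_of_lt (lt_of_lt_of_le hlt (ihw hiw).1),
        fun _ => lt_of_lt_of_le hlt (ihw hiw).1⟩
  have hfin := (hmono m le_rfl).2 hm
  have hlast_eq : g ⟨m, by omega⟩ = g 0 := by
    show (f (Fin.last m)).1.getLast (hne _) = (f 0).1.getLast (hne _)
    have h1 : (f (Fin.last m)).1.getLast? = (f 0).1.getLast? := by rw [hcyc]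
    rw [hglast, hglast] at h1
    simpa using h1
  rw [hlast_eq] at hfin
  exact lt_irrefl _ hfin

end AwT


/-! ### Linear-bounded Turing machines -/

/-- A (nondeterministic) linear-bounded Turing machine with alphabet `σ` and states `Q`.
A transition `(q, α, α', D, q')` reads `α`, writes `α'` and moves left (`D = false`) or
right (`D = true`). -/
structure LBTM (σ Q : Type) where
  q0 : Q
  qF : Q
  T : Finset (Q × σ × σ × Bool × Q)

/-- One step of an LBTM on a tape of length `n`; configurations are (state, tape, head). -/
def LBTMStep {σ Q : Type} (M : LBTM σ Q) {n : ℕ}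
    (c c' : Q × (Fin n → σ) × Fin n) : Prop :=
  ∃ α' : σ, ∃ D : Bool, (c.1, c.2.1 c.2.2, α', D, c'.1) ∈ M.T ∧
    c'.2.1 = Function.update c.2.1 c.2.2 α' ∧
    ((D = true ∧ (c'.2.2 : ℕ) = (c.2.2 : ℕ) + 1) ∨
     (D = false ∧ (c.2.2 : ℕ) = (c'.2.2 : ℕ) + 1))

/-- `M` accepts the word `w`. -/
def LBTMAccepts {σ Q : Type} (M : LBTM σ Q) {n : ℕ} (hn : 0 < n) (w : Fin n → σ) : Prop :=
  ∃ c : Q × (Fin n → σ) × Fin n,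
    Relation.ReflTransGen (LBTMStep M) (M.q0, w, ⟨0, hn⟩) c ∧ c.1 = M.qF


/-- Under the modified semantics in which every delay of a timed run is
required to be strictly positive, every AT `A` is race-avoiding: (1) no two distinct actions
occur at total delay zero, so the only possible races arise from a timer discarded at value
zero; (2) the block graph of every such run is acyclic; (3) hence every such run with races
can be wiggled; and (4) `A` is race-avoiding with respect to this semantics. -/
theorem positive_delays_race_avoiding {X I Q : Type} [DecidableEq X] [Fintype X] [Fintype I]
    [Fintype Q] (A : AwT.AT X I Q) :
    (∀ (n : ℕ) (ρ : AwT.TimedRun A n), AwT.Padded ρ → AwT.AllPos ρ →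
      ∀ k k' : Fin n, k < k' → AwT.delayBetween ρ k k' ≠ 0) ∧
    (∀ (n : ℕ) (ρ : AwT.TimedRun A n), AwT.Padded ρ → AwT.AllPos ρ → ¬ AwT.HasCycle ρ) ∧
    (∀ (n : ℕ) (ρ : AwT.TimedRun A n), AwT.Padded ρ → AwT.AllPos ρ → AwT.HasRace ρ →
      AwT.Wigglable ρ) ∧
    (∀ (n : ℕ) (ρ : AwT.TimedRun A n), AwT.Padded ρ → AwT.AllPos ρ → AwT.HasRace ρ →
      ∃ (n' : ℕ) (ρ' : AwT.TimedRun A n'), AwT.Padded ρ' ∧ AwT.AllPos ρ' ∧ ¬ AwT.HasRace ρ' ∧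
        AwT.untime ρ' = AwT.untime ρ) := by
  refine ⟨?_, ?_, ?_, ?_⟩
  · intro n ρ hP hA k k' hlt
    exact ne_of_gt (AwT.delayBetween_pos hA hlt)
  · intro n ρ hP hA
    exact AwT.no_cycle hA
  · intro n ρ hP hA hr
    obtain ⟨ρ', hrtg, hP', hA', hnr, hut⟩ :=
      AwT.master ((AwT.CF ρ).card) ρ hP hA le_rfl
    exact ⟨ρ', hrtg, hP', hnr, hut⟩
  · intro n ρ hP hA hr
    obtain ⟨ρ', hrtg, hP', hA', hnr, hut⟩ :=
      AwT.master ((AwT.CF ρ).card) ρ hP hA le_rfl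
    exact ⟨n, ρ', hP', hA', hnr, hut⟩
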